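/- For the power series A_0 with A_0(0)=0 satisfying z(1+A_0)^3=A_0, one has the identity 1/(1-2A_0(z)) = \sum_{n\ge 0} \binom{3n-1}{n} z^n (with the n=0 term equal to 1). -/

import Mathlib

open PowerSeries

private lemma keyN (m : ℕ) :
    2*(m+2)*(2*m+3) * ((3*m+5).choose (m+2)) =
      3*(3*m+4)*(3*m+5) * ((3*m+2).choose (m+1)) := by
  have h1 : (3*m+5).choose (m+2) * ((m+2).factorial * (2*m+3).factorial)
      = (3*m+5).factorial := by
    have h := Nat.choose_mul_factorial_mul_factorial (show m+2 ≤ 3*m+5 by omega)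
    rw [show 3*m+5-(m+2) = 2*m+3 by omega] at h
    rw [← h]; ring
  have h2 : (3*m+2).choose (m+1) * ((m+1).factorial * (2*m+1).factorial)
      = (3*m+2).factorial := by
    have h := Nat.choose_mul_factorial_mul_factorial (show m+1 ≤ 3*m+2 by omega)
    rw [show 3*m+2-(m+1) = 2*m+1 by omega] at h
    rw [← h]; ring
  have e1 : (m+2).factorial = (m+2)*(m+1).factorial := Nat.factorial_succ (m+1)
  have e2 : (2*m+3).factorial = (2*m+1+1+1)*((2*m+1+1)*(2*m+1).factorial) := by
    rw [show 2*m+3 = 2*m+1+1+1 by omega, Nat.factorial_succ, Nat.factorial_succ]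
  have e3 : (3*m+5).factorial
      = (3*m+2+1+1+1)*((3*m+2+1+1)*((3*m+2+1)*(3*m+2).factorial)) := by
    rw [show 3*m+5 = 3*m+2+1+1+1 by omega, Nat.factorial_succ, Nat.factorial_succ,
      Nat.factorial_succ]
  have hpos : 0 < (m+2).factorial * (2*m+3).factorial := by positivity
  apply Nat.eq_of_mul_eq_mul_right hpos
  calc 2*(m+2)*(2*m+3) * ((3*m+5).choose (m+2)) * ((m+2).factorial * (2*m+3).factorial)
      = 2*(m+2)*(2*m+3) * ((3*m+5).choose (m+2) * ((m+2).factorial * (2*m+3).factorial)) := by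
        ring
    _ = 2*(m+2)*(2*m+3) * (3*m+5).factorial := by rw [h1]
    _ = 3*(3*m+4)*(3*m+5) * ((3*m+2).choose (m+1)) * ((m+2).factorial * (2*m+3).factorial) := by
        rw [e3, e1, e2, ← h2]; ring

private lemma keyQ (n : ℕ) :
    (2*((n:ℚ)+1)*(2*(n:ℚ)+1)) * ((3*(n+1)-1).choose (n+1) : ℚ) =
      (27*(n:ℚ)^2+27*(n:ℚ)+6) * ((3*n-1).choose n : ℚ) - (if n = 0 then 2 else 0) := by
  cases n with
  | zero => norm_num [Nat.choose]
  | succ m =>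
    rw [show 3*(m+1+1)-1 = 3*m+5 by omega, show m+1+1 = m+2 from rfl,
      show 3*(m+1)-1 = 3*m+2 by omega, if_neg (Nat.succ_ne_zero m)]
    have h := keyN m
    have h' : ((2*(m+2)*(2*m+3) * ((3*m+5).choose (m+2)) : ℕ) : ℚ)
        = ((3*(3*m+4)*(3*m+5) * ((3*m+2).choose (m+1)) : ℕ) : ℚ) := by rw [h]
    push_cast at h' ⊢
    linear_combination h'

/-- For the formal power series `A₀` with `A₀(0) = 0` satisfying `z(1+A₀)^3 = A₀`,
one has `1/(1-2A₀(z)) = ∑_{n ≥ 0} binom(3n-1, n) z^n` (with the `n = 0` term equal to `1`). -/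
theorem stmt_2 (A₀ : PowerSeries ℚ) (h0 : constantCoeff A₀ = 0)
    (hA : X * (1 + A₀) ^ 3 = A₀) :
    (1 - 2 * A₀)⁻¹ = PowerSeries.mk fun n => (Nat.choose (3 * n - 1) n : ℚ) := by
  set S : ℚ⟦X⟧ := (1 - 2 * A₀)⁻¹ with hS
  have hu0 : constantCoeff (1 - 2 * A₀) ≠ 0 := by simp [h0]
  have hu : (1 - 2 * A₀) * S = 1 := PowerSeries.mul_inv_cancel _ hu0
  have hS0 : constantCoeff S = 1 := by
    rw [hS, PowerSeries.constantCoeff_inv]; simp [h0]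
  -- the algebraic equation for S
  have hG0 : X * (3*S-1)^3 = 4*S^3 - 4*S^2 := by
    linear_combination ((8 : ℚ⟦X⟧)*S^3) * hA +
      ((-4 : ℚ⟦X⟧)*S^2 + X + (-8 : ℚ⟦X⟧)*X*S + (19 : ℚ⟦X⟧)*X*S^2 + (-2 : ℚ⟦X⟧)*X*A₀*S
        + (14 : ℚ⟦X⟧)*X*A₀*S^2 + (4 : ℚ⟦X⟧)*X*A₀^2*S^2) * hu
  -- derivative facts for numerals
  have h3 : d⁄dX ℚ (3:ℚ⟦X⟧) = 0 := by rw [← Nat.cast_ofNat, Derivation.map_natCast]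
  have h4 : d⁄dX ℚ (4:ℚ⟦X⟧) = 0 := by rw [← Nat.cast_ofNat, Derivation.map_natCast]
  have h8 : d⁄dX ℚ (8:ℚ⟦X⟧) = 0 := by rw [← Nat.cast_ofNat, Derivation.map_natCast]
  have h9 : d⁄dX ℚ (9:ℚ⟦X⟧) = 0 := by rw [← Nat.cast_ofNat, Derivation.map_natCast]
  have h12 : d⁄dX ℚ (12:ℚ⟦X⟧) = 0 := by rw [← Nat.cast_ofNat, Derivation.map_natCast]
  have h27 : d⁄dX ℚ (27:ℚ⟦X⟧) = 0 := by rw [← Nat.cast_ofNat, Derivation.map_natCast]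
  have h54 : d⁄dX ℚ (54:ℚ⟦X⟧) = 0 := by rw [← Nat.cast_ofNat, Derivation.map_natCast]
  have h81 : d⁄dX ℚ (81:ℚ⟦X⟧) = 0 := by rw [← Nat.cast_ofNat, Derivation.map_natCast]
  -- first derivative of the algebraic equation
  have hG1 : (-1 : ℚ⟦X⟧) + (9 : ℚ⟦X⟧)*S + (8 : ℚ⟦X⟧)*S*(d⁄dX ℚ S) + (-27 : ℚ⟦X⟧)*S^2
      + (-12 : ℚ⟦X⟧)*S^2*(d⁄dX ℚ S) + (27 : ℚ⟦X⟧)*S^3 + (9 : ℚ⟦X⟧)*X*(d⁄dX ℚ S)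
      + (-54 : ℚ⟦X⟧)*X*S*(d⁄dX ℚ S) + (81 : ℚ⟦X⟧)*X*S^2*(d⁄dX ℚ S) = 0 := by
    have h := congrArg (d⁄dX ℚ) hG0
    simp [Derivation.leibniz, Derivation.leibniz_pow, smul_eq_mul, h3, h4] at h
    linear_combination h
  -- second derivative
  have hG2 : (18 : ℚ⟦X⟧)*(d⁄dX ℚ S) + (8 : ℚ⟦X⟧)*(d⁄dX ℚ S)^2
      + (8 : ℚ⟦X⟧)*S*(d⁄dX ℚ (d⁄dX ℚ S)) + (-108 : ℚ⟦X⟧)*S*(d⁄dX ℚ S)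
      + (-24 : ℚ⟦X⟧)*S*(d⁄dX ℚ S)^2 + (-12 : ℚ⟦X⟧)*S^2*(d⁄dX ℚ (d⁄dX ℚ S))
      + (162 : ℚ⟦X⟧)*S^2*(d⁄dX ℚ S) + (9 : ℚ⟦X⟧)*X*(d⁄dX ℚ (d⁄dX ℚ S))
      + (-54 : ℚ⟦X⟧)*X*(d⁄dX ℚ S)^2 + (-54 : ℚ⟦X⟧)*X*S*(d⁄dX ℚ (d⁄dX ℚ S))
      + (162 : ℚ⟦X⟧)*X*S*(d⁄dX ℚ S)^2 + (81 : ℚ⟦X⟧)*X*S^2*(d⁄dX ℚ (d⁄dX ℚ S)) = 0 := by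
    have h := congrArg (d⁄dX ℚ) hG1
    simp [Derivation.leibniz, Derivation.leibniz_pow, smul_eq_mul, h3, h4, h8, h9, h12, h27,
      h54, h81] at h
    linear_combination h
  -- the ODE, multiplied by W^3
  have hT : ((4*X-27*X^2)*(d⁄dX ℚ (d⁄dX ℚ S)) + (2-54*X)*(d⁄dX ℚ S) - 6*S + 2)
      * (9*X*(3*S-1)^2 - 12*S^2 + 8*S)^3 = 0 := by
    linear_combination
      ((32 : ℚ⟦X⟧) + (-96 : ℚ⟦X⟧)*S + (-216 : ℚ⟦X⟧)*S^2 + (864 : ℚ⟦X⟧)*S^3 + (-648 : ℚ⟦X⟧)*S^4 + (54 : ℚ⟦X⟧)*X + (-648 : ℚ⟦X⟧)*X*S + (2916 : ℚ⟦X⟧)*X*S^2 + (-5832 : ℚ⟦X⟧)*X*S^3 + (4374 : ℚ⟦X⟧)*X*S^4) * hG0 +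
      ((128 : ℚ⟦X⟧)*S^2 + (-384 : ℚ⟦X⟧)*S^3 + (288 : ℚ⟦X⟧)*S^4 + (-32 : ℚ⟦X⟧)*X + (96 : ℚ⟦X⟧)*X*S + (-256 : ℚ⟦X⟧)*X*S*(d⁄dX ℚ S) + (-3024 : ℚ⟦X⟧)*X*S^2 + (1152 : ℚ⟦X⟧)*X*S^2*(d⁄dX ℚ S) + (8640 : ℚ⟦X⟧)*X*S^3 + (-1152 : ℚ⟦X⟧)*X*S^3*(d⁄dX ℚ S) + (-6480 : ℚ⟦X⟧)*X*S^4 + (-54 : ℚ⟦X⟧)*X^2 + (-288 : ℚ⟦X⟧)*X^2*(d⁄dX ℚ S) + (-3240 : ℚ⟦X⟧)*X^2*S + (6048 : ℚ⟦X⟧)*X^2*S*(d⁄dX ℚ S) + (26244 : ℚ⟦X⟧)*X^2*S^2 + (-23328 : ℚ⟦X⟧)*X^2*S^2*(d⁄dX ℚ S) + (-64152 : ℚ⟦X⟧)*X^2*S^3 + (23328 : ℚ⟦X⟧)*X^2*S^3*(d⁄dX ℚ S) + (48114 : ℚ⟦X⟧)*X^2*S^4 + (-1458 : ℚ⟦X⟧)*X^3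 + (3888 : ℚ⟦X⟧)*X^3*(d⁄dX ℚ S) + (17496 : ℚ⟦X⟧)*X^3*S + (-46656 : ℚ⟦X⟧)*X^3*S*(d⁄dX ℚ S) + (-78732 : ℚ⟦X⟧)*X^3*S^2 + (157464 : ℚ⟦X⟧)*X^3*S^2*(d⁄dX ℚ S) + (157464 : ℚ⟦X⟧)*X^3*S^3 + (-157464 : ℚ⟦X⟧)*X^3*S^3*(d⁄dX ℚ S) + (-118098 : ℚ⟦X⟧)*X^3*S^4 + (-13122 : ℚ⟦X⟧)*X^4*(d⁄dX ℚ S) + (118098 : ℚ⟦X⟧)*X^4*S*(d⁄dX ℚ S) + (-354294 : ℚ⟦X⟧)*X^4*S^2*(d⁄dX ℚ S) + (354294 : ℚ⟦X⟧)*X^4*S^3*(d⁄dX ℚ S)) * hG1 +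
      ((256 : ℚ⟦X⟧)*X*S^2 + (-768 : ℚ⟦X⟧)*X*S^3 + (576 : ℚ⟦X⟧)*X*S^4 + (576 : ℚ⟦X⟧)*X^2*S + (-6048 : ℚ⟦X⟧)*X^2*S^2 + (15552 : ℚ⟦X⟧)*X^2*S^3 + (-11664 : ℚ⟦X⟧)*X^2*S^4 + (324 : ℚ⟦X⟧)*X^3 + (-7776 : ℚ⟦X⟧)*X^3*S + (46656 : ℚ⟦X⟧)*X^3*S^2 + (-104976 : ℚ⟦X⟧)*X^3*S^3 + (78732 : ℚ⟦X⟧)*X^3*S^4 + (-2187 : ℚ⟦X⟧)*X^4 + (26244 : ℚ⟦X⟧)*X^4*S + (-118098 : ℚ⟦X⟧)*X^4*S^2 + (236196 : ℚ⟦X⟧)*X^4*S^3 + (-177147 : ℚ⟦X⟧)*X^4*S^4) * hG2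
  -- W is nonzero
  have hWc : constantCoeff (9*X*(3*S-1)^2 - 12*S^2 + 8*S) = -4 := by
    simp [hS0, map_ofNat]
    norm_num
  have hWne : (9*X*(3*S-1)^2 - 12*S^2 + 8*S) ≠ 0 := by
    intro h
    rw [h] at hWc
    simp at hWc
  have hODE : (4*X-27*X^2)*(d⁄dX ℚ (d⁄dX ℚ S)) + (2-54*X)*(d⁄dX ℚ S) - 6*S + 2 = 0 := by
    rcases mul_eq_zero.mp hT with h | h
    · exact h
    · exact absurd ((pow_eq_zero_iff (by norm_num : (3:ℕ) ≠ 0)).mp h) hWne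
  -- rearranged form of the ODE, ready for coefficient extraction
  have hODE' : C 4*(X*(d⁄dX ℚ (d⁄dX ℚ S))) + C 2*(d⁄dX ℚ S) + C 2
      = C 27*(X*(X*(d⁄dX ℚ (d⁄dX ℚ S)))) + C 54*(X*(d⁄dX ℚ S)) + C 6*S := by
    simp only [map_ofNat]
    linear_combination hODE
  -- the coefficient recurrence
  have hrec : ∀ n : ℕ, (2*((n:ℚ)+1)*(2*(n:ℚ)+1)) * coeff (n+1) S
      = (27*(n:ℚ)^2+27*(n:ℚ)+6) * coeff n S - (if n = 0 then 2 else 0) := by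
    intro n
    match n with
    | 0 =>
      have hc := congrArg (coeff 0) hODE'
      simp only [map_add, coeff_C_mul, coeff_zero_X_mul, coeff_derivative, coeff_C] at hc
      norm_num at hc ⊢
      linear_combination hc
    | 1 =>
      have hc := congrArg (coeff 1) hODE'
      simp only [map_add, coeff_C_mul, coeff_succ_X_mul, coeff_zero_X_mul, coeff_derivative,
        coeff_C] at hc
      norm_num at hc ⊢
      linear_combination hc
    | (k+2) =>
      have hc := congrArg (coeff (k+2)) hODE'
      simp only [map_add, coeff_C_mul, coeff_succ_X_mul, coeff_zero_X_mul, coeff_derivative,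
        coeff_C] at hc
      norm_num at hc ⊢
      linear_combination hc
  -- conclude by induction on coefficients
  apply PowerSeries.ext
  intro n
  rw [coeff_mk]
  induction n with
  | zero =>
    rw [coeff_zero_eq_constantCoeff, hS0]
    norm_num
  | succ n ih =>
    have h := hrec n
    rw [ih] at h
    have h2 : (2*((n:ℚ)+1)*(2*(n:ℚ)+1)) ≠ 0 := by positivity
    apply mul_left_cancel₀ h2
    linear_combination h - keyQ n
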